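/- Let g be an n-dimensional real Lie algebra with tr(ad_x) = 0 for all x ∈ g, and let ∂ denote the Koszul boundary operator on the exterior algebra of g. Then for X ∈ Λ^{k+1} g and Y ∈ Λ^{n-k} g one has ∂X ∧ Y = (-1)^{k+1} X ∧ ∂Y. -/

import Mathlib

open scoped BigOperators

/-- The wedge monomial `x₁ ∧ ⋯ ∧ x_m` associated to a list of vectors. -/
noncomputable def wedgeList {g : Type*} [AddCommGroup g] [Module ℝ g]
    (l : List g) : ExteriorAlgebra ℝ g :=
  (l.map fun x => ExteriorAlgebra.ι ℝ x).prod

namespace KoszulAux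

open ExteriorAlgebra Module

section Basic

variable {g : Type*} [AddCommGroup g] [Module ℝ g]

lemma wedgeList_nil : wedgeList ([] : List g) = 1 := rfl

lemma wedgeList_cons (a : g) (l : List g) :
    wedgeList (a :: l) = ι ℝ a * wedgeList l := by
  simp [wedgeList]

lemma wedgeList_append (l₁ l₂ : List g) :
    wedgeList (l₁ ++ l₂) = wedgeList l₁ * wedgeList l₂ := by
  simp [wedgeList]

lemma ι_anticomm (x y : g) : ι ℝ x * ι ℝ y = -(ι ℝ y * ι ℝ x) := by
  have h := ι_add_mul_swap (R := ℝ) x y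
  rw [eq_neg_iff_add_eq_zero]
  exact h

lemma wedgeList_mul_ι (l : List g) (x : g) :
    wedgeList l * ι ℝ x = ((-1 : ℝ)) ^ l.length • (ι ℝ x * wedgeList l) := by
  induction l with
  | nil => simp [wedgeList_nil]
  | cons a l ih =>
      rw [wedgeList_cons, List.length_cons, mul_assoc, ih, mul_smul_comm, ← mul_assoc,
        ι_anticomm a x, pow_succ]
      simp [mul_smul, mul_assoc]

lemma wedgeList_set (l : List g) (j : ℕ) (hj : j < l.length) (b : g) :
    wedgeList (l.set j b) = ((-1 : ℝ)) ^ j • wedgeList (b :: l.eraseIdx j) := by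
  induction l generalizing j with
  | nil => simp at hj
  | cons a l ih =>
      cases j with
      | zero => simp [List.set]
      | succ j =>
          have hj' : j < l.length := by simpa using hj
          rw [List.set_cons_succ, List.eraseIdx_cons_succ, wedgeList_cons, ih j hj',
            wedgeList_cons, wedgeList_cons, mul_smul_comm, ← mul_assoc, ι_anticomm a b,
            pow_succ]
          rw [wedgeList_cons]
          simp [mul_smul, mul_assoc]

lemma wedgeList_ofFn {m : ℕ} (v : Fin m → g) :
    wedgeList (List.ofFn v) = ιMulti ℝ m v := by
  rw [ιMulti_apply, wedgeList, List.map_ofFn]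
  rfl

lemma set_ofFn {m : ℕ} (v : Fin m → g) (j : Fin m) (b : g) :
    (List.ofFn v).set j b = List.ofFn (Function.update v j b) := by
  apply List.ext_getElem
  · simp
  · intro i h1 h2
    simp only [List.getElem_set, List.getElem_ofFn]
    by_cases h : i = (j : ℕ)
    · simp [h, Function.update_apply, Fin.ext_iff]
    · simp [h, Function.update_apply, Fin.ext_iff, Ne.symm h]

end Basic

section TraceLemma

variable {g : Type*} [AddCommGroup g] [Module ℝ g] [FiniteDimensional ℝ g]

lemma sum_update_eq_trace_smul (f : g →ₗ[ℝ] g)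
    (v : Fin (finrank ℝ g) → g) :
    ∑ j, ιMulti ℝ (finrank ℝ g) (Function.update v j (f (v j)))
      = (LinearMap.trace ℝ g f) • ιMulti ℝ (finrank ℝ g) v := by
  classical
  set F : MultilinearMap ℝ (fun _ : Fin (finrank ℝ g) => g) (ExteriorAlgebra ℝ g) :=
    ∑ j : Fin (finrank ℝ g), (ιMulti ℝ (finrank ℝ g)).toMultilinearMap.compLinearMap
      (fun i => if i = j then f else LinearMap.id) with hF
  set G : MultilinearMap ℝ (fun _ : Fin (finrank ℝ g) => g) (ExteriorAlgebra ℝ g) :=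
    (LinearMap.trace ℝ g f) • (ιMulti ℝ (finrank ℝ g)).toMultilinearMap with hG
  have hFapp : ∀ w : Fin (finrank ℝ g) → g,
      F w = ∑ j, ιMulti ℝ (finrank ℝ g) (Function.update w j (f (w j))) := by
    intro w
    rw [hF, MultilinearMap.sum_apply]
    refine Finset.sum_congr rfl fun j _ => ?_
    have harg : (fun i => (if i = j then f else LinearMap.id) (w i))
        = Function.update w j (f (w j)) := by
      funext i
      rcases eq_or_ne i j with h | h
      · subst h; simp
      · simp [h, Function.update_apply]
    rw [MultilinearMap.compLinearMap_apply, harg]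
    rfl
  have b : Basis (Fin (finrank ℝ g)) ℝ g := Module.finBasis ℝ g
  have key : F = G := by
    apply Basis.ext_multilinear (fun _ => b)
    intro σ
    rw [hFapp]
    by_cases hinj : Function.Injective σ
    · have hbij : Function.Bijective σ := Finite.injective_iff_bijective.mp hinj
      have hterm : ∀ j : Fin (finrank ℝ g),
          ιMulti ℝ (finrank ℝ g) (Function.update (fun i => b (σ i)) j (f (b (σ j))))
            = (b.repr (f (b (σ j))) (σ j)) • ιMulti ℝ (finrank ℝ g) (fun i => b (σ i)) := by
        intro j
        have hrepr : f (b (σ j)) = ∑ a, (b.repr (f (b (σ j))) a) • b a :=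
          (Basis.sum_repr b (f (b (σ j)))).symm
        rw [hrepr, AlternatingMap.map_update_sum]
        rw [Finset.sum_eq_single (σ j)]
        · rw [AlternatingMap.map_update_smul]
          rw [show f (b (σ j)) = ∑ a, (b.repr (f (b (σ j))) a) • b a from hrepr] at *
          simp only [Function.update_eq_self]
          congr 1
          rw [← hrepr]
        · intro a _ ha
          obtain ⟨i, hi⟩ := hbij.surjective a
          have hij : i ≠ j := fun h => ha (h ▸ hi.symm ▸ rfl)
          rw [AlternatingMap.map_update_smul]
          have hz : ιMulti ℝ (finrank ℝ g)
              (Function.update (fun i => b (σ i)) j (b a)) = 0 := by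
            apply AlternatingMap.map_eq_zero_of_eq _ _ (i := i) (j := j) _ hij
            rw [Function.update_of_ne hij, Function.update_self, hi]
          rw [hz, smul_zero]
        · intro h; exact absurd (Finset.mem_univ _) h
      rw [Finset.sum_congr rfl (fun j _ => hterm j), ← Finset.sum_smul, hG,
        MultilinearMap.smul_apply]
      congr 1
      rw [LinearMap.trace_eq_matrix_trace ℝ b f, Matrix.trace]
      rw [← hbij.sum_comp (fun i => Matrix.diag (LinearMap.toMatrix b b f) i)]
      refine Finset.sum_congr rfl fun j _ => ?_
      rw [Matrix.diag, LinearMap.toMatrix_apply]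
    · obtain ⟨p, q, hpq, hne⟩ : ∃ p q, σ p = σ q ∧ p ≠ q := by
        simp only [Function.Injective, not_forall] at hinj
        obtain ⟨p, q, h1, h2⟩ := hinj
        exact ⟨p, q, h1, h2⟩
      have hGz : G (fun i => b (σ i)) = 0 := by
        rw [hG, MultilinearMap.smul_apply]
        rw [AlternatingMap.coe_multilinearMap, AlternatingMap.map_eq_zero_of_eq _ _
          (i := p) (j := q) (by rw [hpq]) hne, smul_zero]
      rw [hGz]
      have hzero : ∀ j : Fin (finrank ℝ g), j ≠ p → j ≠ q →
          ιMulti ℝ (finrank ℝ g)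
            (Function.update (fun i => b (σ i)) j (f (b (σ j)))) = 0 := by
        intro j hjp hjq
        apply AlternatingMap.map_eq_zero_of_eq _ _ (i := p) (j := q) _ hne
        rw [Function.update_of_ne (Ne.symm hjp), Function.update_of_ne (Ne.symm hjq), hpq]
      rw [← Finset.sum_subset (Finset.subset_univ ({p, q} : Finset (Fin (finrank ℝ g))))
        (fun j _ hj => by
          simp only [Finset.mem_insert, Finset.mem_singleton, not_or] at hj
          exact hzero j hj.1 hj.2)]
      rw [Finset.sum_pair hne]
      have hswap : Function.update (fun i => b (σ i)) q (f (b (σ q)))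
          = (Function.update (fun i => b (σ i)) p (f (b (σ p)))) ∘ Equiv.swap p q := by
        funext i
        rcases eq_or_ne i p with h | h
        · subst h
          rw [Function.update_of_ne hne, Function.comp_apply, Equiv.swap_apply_left,
            Function.update_of_ne (Ne.symm hne), hpq]
        · rcases eq_or_ne i q with h2 | h2
          · subst h2
            rw [Function.update_self, Function.comp_apply, Equiv.swap_apply_right,
              Function.update_self, hpq]
          · rw [Function.update_of_ne h2, Function.comp_apply,
              Equiv.swap_apply_of_ne_of_ne h h2, Function.update_of_ne h]
      rw [hswap, AlternatingMap.map_swap _ _ hne, add_neg_cancel]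
  calc ∑ j, ιMulti ℝ (finrank ℝ g) (Function.update v j (f (v j)))
      = F v := (hFapp v).symm
    _ = G v := by rw [key]
    _ = (LinearMap.trace ℝ g f) • ιMulti ℝ (finrank ℝ g) v := by
        rw [hG, MultilinearMap.smul_apply]; rfl

set_option synthInstance.maxHeartbeats 1000000 in
lemma wedgeList_eq_zero_of_long (l : List g) (h : finrank ℝ g < l.length) :
    wedgeList l = 0 := by
  have h1 : wedgeList l = ιMulti ℝ l.length l.get := by
    conv_lhs => rw [← List.ofFn_get l]
    exact wedgeList_ofFn _
  rw [h1]
  apply AlternatingMap.map_linearDependent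
  intro hli
  have := hli.fintype_card_le_finrank
  simp only [Fintype.card_fin] at this
  omega

end TraceLemma

section Theta

variable {g : Type*} [LieRing g] [LieAlgebra ℝ g]

/-- The derivation extension of `ad x` applied to a wedge monomial. -/
noncomputable def theta (x : g) (l : List g) : ExteriorAlgebra ℝ g :=
  ∑ j : Fin l.length, wedgeList (l.set j ⁅x, l.get j⁆)

lemma theta_nil (x : g) : theta x ([] : List g) = 0 := by
  simp [theta]

lemma theta_cons (x a : g) (l : List g) :
    theta x (a :: l) = ι ℝ ⁅x, a⁆ * wedgeList l + ι ℝ a * theta x l := by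
  rw [theta]
  simp only [List.length_cons]
  rw [Fin.sum_univ_succ]
  have h2 : ∀ j : Fin l.length,
      wedgeList ((a :: l).set (Fin.succ j) ⁅x, (a :: l).get (Fin.succ j)⁆)
        = ι ℝ a * wedgeList (l.set j ⁅x, l.get j⁆) := by
    intro j
    simp only [List.get_eq_getElem, Fin.val_succ, List.getElem_cons_succ, List.set_cons_succ]
    rw [wedgeList_cons]
  rw [Finset.sum_congr rfl (fun j _ => h2 j), ← Finset.mul_sum, ← theta]
  simp [wedgeList_cons]

lemma theta_append (x : g) (l₁ l₂ : List g) :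
    theta x (l₁ ++ l₂) = theta x l₁ * wedgeList l₂ + wedgeList l₁ * theta x l₂ := by
  induction l₁ with
  | nil => simp [theta_nil, wedgeList_nil]
  | cons a l₁ ih =>
      rw [List.cons_append, theta_cons, ih, theta_cons, wedgeList_cons, wedgeList_append,
        add_mul, mul_add]
      noncomm_ring

variable [FiniteDimensional ℝ g]

lemma theta_top (x : g) (l : List g) (hl : l.length = finrank ℝ g) :
    theta x l = (LinearMap.trace ℝ g (LieAlgebra.ad ℝ g x)) • wedgeList l := by
  classical
  set v : Fin (finrank ℝ g) → g := fun i => l.get (Fin.cast hl.symm i) with hv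
  have hlv : l = List.ofFn v := by
    apply List.ext_getElem
    · simp [hl]
    · intro i h1 h2
      simp only [List.getElem_ofFn, hv]
      rfl
  rw [hlv, theta]
  have hsum : ∑ j : Fin (List.ofFn v).length,
      wedgeList ((List.ofFn v).set j ⁅x, (List.ofFn v).get j⁆)
      = ∑ j : Fin (finrank ℝ g),
        ιMulti ℝ (finrank ℝ g) (Function.update v j ((LieAlgebra.ad ℝ g x) (v j))) := by
    refine Fintype.sum_equiv (finCongr ((List.length_ofFn (f := v)))) _ _ fun j => ?_
    have hget : (List.ofFn v).get j = v (finCongr ((List.length_ofFn (f := v))) j) := by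
      simp only [List.get_ofFn]
      rfl
    rw [hget, show ((j : Fin (List.ofFn v).length) : ℕ)
        = ((finCongr ((List.length_ofFn (f := v))) j : Fin (finrank ℝ g)) : ℕ) from rfl]
    rw [show (⁅x, v (finCongr ((List.length_ofFn (f := v))) j)⁆ : g)
        = (LieAlgebra.ad ℝ g x) (v (finCongr ((List.length_ofFn (f := v))) j)) from rfl]
    rw [set_ofFn v (finCongr ((List.length_ofFn (f := v))) j), wedgeList_ofFn]
  rw [hsum, sum_update_eq_trace_smul, wedgeList_ofFn]

end Theta


section Bd

variable {g : Type*} [LieRing g] [LieAlgebra ℝ g]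

variable (bd : ExteriorAlgebra ℝ g →ₗ[ℝ] ExteriorAlgebra ℝ g)
    (hKoszul : ∀ l : List g,
      bd (wedgeList l) =
        ∑ i : Fin l.length, ∑ j : Fin l.length,
          if (i : ℕ) < (j : ℕ) then
            ((-1 : ℝ)) ^ ((i : ℕ) + (j : ℕ) + 1) •
              wedgeList (⁅l.get i, l.get j⁆ :: (l.eraseIdx j).eraseIdx i)
          else 0)

include hKoszul

lemma bd_singleton (x : g) : bd (wedgeList [x]) = 0 := by
  rw [hKoszul]
  simp

lemma bd_mul_ι (l : List g) (x : g) :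
    bd (wedgeList l) * ι ℝ x
      = ((-1 : ℝ)) ^ (l.length + 1) • (ι ℝ x * bd (wedgeList l)) := by
  rw [hKoszul, Finset.sum_mul, Finset.mul_sum, Finset.smul_sum]
  refine Finset.sum_congr rfl fun i _ => ?_
  rw [Finset.sum_mul, Finset.mul_sum, Finset.smul_sum]
  refine Finset.sum_congr rfl fun j _ => ?_
  by_cases hij : (i : ℕ) < (j : ℕ)
  · rw [if_pos hij]
    have hj : (j : ℕ) < l.length := j.isLt
    have hi : (i : ℕ) < (l.eraseIdx (j : ℕ)).length := by
      rw [List.length_eraseIdx]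
      simp only [if_pos hj]
      omega
    have hlen : (⁅l.get i, l.get j⁆ :: (l.eraseIdx ↑j).eraseIdx ↑i).length
        = l.length - 1 := by
      rw [List.length_cons, List.length_eraseIdx, if_pos hi, List.length_eraseIdx, if_pos hj]
      omega
    rw [smul_mul_assoc, wedgeList_mul_ι, hlen, mul_smul_comm, smul_smul, smul_smul]
    congr 1
    have h2 : l.length + 1 = (l.length - 1) + 2 := by
      have := j.isLt; omega
    rw [h2, pow_add]
    ring
  · rw [if_neg hij, zero_mul, mul_zero, smul_zero]

lemma bd_cons (x : g) (l : List g) :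
    bd (wedgeList (x :: l)) = theta x l - ι ℝ x * bd (wedgeList l) := by
  rw [hKoszul]
  simp only [List.length_cons, Fin.sum_univ_succ, Fin.val_zero, Fin.val_succ,
    List.get_eq_getElem, List.getElem_cons_zero, List.getElem_cons_succ,
    List.eraseIdx_cons_succ, List.eraseIdx_cons_zero, Nat.lt_irrefl, if_false,
    Nat.not_lt_zero, Nat.succ_pos, if_true, Nat.zero_add, Nat.add_lt_add_iff_right,
    zero_add]
  have hA : ∑ j : Fin l.length,
      ((-1 : ℝ)) ^ ((j : ℕ) + 1 + 1) • wedgeList (⁅x, l[(j : ℕ)]⁆ :: l.eraseIdx (j : ℕ))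
      = theta x l := by
    rw [theta]
    refine Finset.sum_congr rfl fun j _ => ?_
    rw [wedgeList_set l j j.isLt]
    rw [show ((j : ℕ)) + 1 + 1 = (j : ℕ) + 2 from rfl, pow_add]
    norm_num
  have hB : ∀ (i j : Fin l.length), (if (i : ℕ) < (j : ℕ) then
        ((-1 : ℝ)) ^ ((i : ℕ) + 1 + ((j : ℕ) + 1) + 1) •
          wedgeList (⁅l[(i : ℕ)], l[(j : ℕ)]⁆ :: x :: (l.eraseIdx (j : ℕ)).eraseIdx (i : ℕ))
      else 0)
      = -(ι ℝ x * (if (i : ℕ) < (j : ℕ) then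
          ((-1 : ℝ)) ^ ((i : ℕ) + (j : ℕ) + 1) •
            wedgeList (⁅l.get i, l.get j⁆ :: (l.eraseIdx (j : ℕ)).eraseIdx (i : ℕ))
        else 0)) := by
    intro i j
    by_cases hij : (i : ℕ) < (j : ℕ)
    · rw [if_pos hij, if_pos hij]
      rw [wedgeList_cons, wedgeList_cons, wedgeList_cons, ← mul_assoc,
        ι_anticomm (⁅l[(i:ℕ)], l[(j:ℕ)]⁆) x, mul_smul_comm]
      rw [show (i : ℕ) + 1 + ((j : ℕ) + 1) + 1 = ((i : ℕ) + (j : ℕ) + 1) + 2 by omega,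
        pow_add]
      simp only [List.get_eq_getElem]
      rw [neg_mul, mul_assoc]
      rw [smul_neg, ← neg_smul]
      norm_num
    · rw [if_neg hij, if_neg hij, mul_zero, neg_zero]
  have hB2 : ∑ i : Fin l.length, ∑ j : Fin l.length, (if (i : ℕ) < (j : ℕ) then
        ((-1 : ℝ)) ^ ((i : ℕ) + 1 + ((j : ℕ) + 1) + 1) •
          wedgeList (⁅l[(i : ℕ)], l[(j : ℕ)]⁆ :: x :: (l.eraseIdx (j : ℕ)).eraseIdx (i : ℕ))
      else 0)
      = -(ι ℝ x * bd (wedgeList l)) := by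
    rw [hKoszul l, Finset.mul_sum, ← Finset.sum_neg_distrib]
    refine Finset.sum_congr rfl fun i _ => ?_
    rw [Finset.mul_sum, ← Finset.sum_neg_distrib]
    exact Finset.sum_congr rfl fun j _ => hB i j
  rw [hA, hB2, ← sub_eq_add_neg]

section ML

variable [FiniteDimensional ℝ g]

lemma ML (htr : ∀ x : g, LinearMap.trace ℝ g (LieAlgebra.ad ℝ g x) = 0) :
    ∀ k : ℕ, k ≤ finrank ℝ g → ∀ lx ly : List g, lx.length = k + 1 →
      ly.length = finrank ℝ g - k →
      bd (wedgeList lx) * wedgeList ly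
        = ((-1 : ℝ)) ^ (k + 1) • (wedgeList lx * bd (wedgeList ly)) := by
  intro k
  induction k with
  | zero =>
      intro _ lx ly hlx hly
      rw [Nat.sub_zero] at hly
      match lx, hlx with
      | [x], _ =>
        have h2 : wedgeList (x :: ly) = 0 :=
          wedgeList_eq_zero_of_long _ (by simp [hly])
        have h3 : theta x ly = 0 := by
          rw [theta_top x ly hly, htr, zero_smul]
        have h4 := bd_cons bd hKoszul x ly
        rw [h2, map_zero, h3, zero_sub] at h4
        have h5 : ι ℝ x * bd (wedgeList ly) = 0 := by
          rw [← neg_eq_zero, h4]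
        rw [bd_singleton bd hKoszul x, zero_mul, wedgeList_cons, wedgeList_nil, mul_one, h5,
          smul_zero]
  | succ k ih =>
      intro hk1 lx ly hlx hly
      match lx with
      | x :: lx' =>
        have hlx' : lx'.length = k + 1 := by simpa using hlx
        have hxly : (x :: ly).length = finrank ℝ g - k := by
          simp only [List.length_cons, hly]
          omega
        have hIH := ih (by omega) lx' (x :: ly) hlx' hxly
        set a := ι ℝ x with ha
        set A := wedgeList lx' with hA
        set B := wedgeList ly with hB
        set tL := theta x lx' with htL
        set tY := theta x ly with htY
        set ε : ℝ := (-1 : ℝ) ^ (k + 1) with hε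
        have hε2 : ε * ε = 1 := by
          rw [hε, ← pow_add]
          exact Even.neg_one_pow ⟨k + 1, by ring⟩
        have hsign : ((-1 : ℝ)) ^ (k + 1 + 1) = -ε := by
          rw [pow_succ, hε]; ring
        have F1 : bd (wedgeList (x :: lx')) = tL - a * bd A := bd_cons bd hKoszul x lx'
        have F2 : bd (wedgeList (x :: ly)) = tY - a * bd B := bd_cons bd hKoszul x ly
        have F4 : bd A * a = (-ε) • (a * bd A) := by
          have := bd_mul_ι bd hKoszul lx' x
          rw [hlx', hsign] at this
          exact this
        have F5 : A * a = ε • (a * A) := by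
          have := wedgeList_mul_ι lx' x
          rw [hlx', ← hε] at this
          exact this
        rw [F2, wedgeList_cons x ly] at hIH
        have h1 : bd A * (a * B) = (-ε) • (a * (bd A * B)) := by
          rw [← mul_assoc, F4, smul_mul_assoc, mul_assoc]
        have h2 : A * (tY - a * bd B) = A * tY - ε • (a * (A * bd B)) := by
          rw [mul_sub, ← mul_assoc, F5, smul_mul_assoc, mul_assoc]
        rw [h1, h2, smul_sub, smul_smul, hε2, one_smul] at hIH
        -- hIH : (-ε) • (a * (bd A * B)) = ε • (A * tY) - (a * (A * bd B))
        have key : a * (bd A * B) = -(A * tY) + ε • (a * (A * bd B)) := by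
          have h6 := congrArg (fun z : ExteriorAlgebra ℝ g => (-ε) • z) hIH
          beta_reduce at h6
          rw [smul_smul, smul_sub, smul_smul] at h6
          have e1 : (-ε) * (-ε) = 1 := by rw [neg_mul_neg, hε2]
          have e2 : (-ε) * ε = -1 := by rw [neg_mul, hε2]
          rw [e1, e2, one_smul, neg_one_smul, neg_smul, sub_neg_eq_add] at h6
          exact h6
        have hzero : tL * B + A * tY = 0 := by
          rw [← theta_append x lx' ly, theta_top x (lx' ++ ly)
            (by rw [List.length_append, hlx', hly]; omega), htr, zero_smul]
        rw [F1, sub_mul, mul_assoc a (bd A) B, key, hsign, wedgeList_cons x lx', mul_assoc,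
          sub_add_eq_sub_sub, sub_neg_eq_add, hzero, zero_sub, ← neg_smul]

end ML

end Bd

end KoszulAux

open ExteriorAlgebra Module in
theorem koszul_wedge_top_degree
    {g : Type*} [LieRing g] [LieAlgebra ℝ g] [FiniteDimensional ℝ g]
    {n : ℕ} (hn : Module.finrank ℝ g = n)
    (htr : ∀ x : g, LinearMap.trace ℝ g (LieAlgebra.ad ℝ g x) = 0)
    (bd : ExteriorAlgebra ℝ g →ₗ[ℝ] ExteriorAlgebra ℝ g)
    (hKoszul : ∀ l : List g,
      bd (wedgeList l) =
        ∑ i : Fin l.length, ∑ j : Fin l.length,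
          if (i : ℕ) < (j : ℕ) then
            ((-1 : ℝ)) ^ ((i : ℕ) + (j : ℕ) + 1) •
              wedgeList (⁅l.get i, l.get j⁆ :: (l.eraseIdx j).eraseIdx i)
          else 0)
    (k : ℕ) (X Y : ExteriorAlgebra ℝ g)
    (hX : X ∈ ⋀[ℝ]^(k+1) g) (hY : Y ∈ ⋀[ℝ]^(n-k) g) :
    bd X * Y = ((-1 : ℝ)) ^ (k + 1) • (X * bd Y) := by
  subst hn
  rw [← ExteriorAlgebra.ιMulti_span_fixedDegree] at hX hY
  induction hX using Submodule.span_induction with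
  | mem X hXm =>
      obtain ⟨v, rfl⟩ := hXm
      induction hY using Submodule.span_induction with
      | mem Y hYm =>
          obtain ⟨w, rfl⟩ := hYm
          by_cases hk : k ≤ Module.finrank ℝ g
          · have h := KoszulAux.ML bd hKoszul htr k hk (List.ofFn v) (List.ofFn w)
              (by simp) (by simp)
            rwa [KoszulAux.wedgeList_ofFn, KoszulAux.wedgeList_ofFn] at h
          · have hzX : ιMulti ℝ (k+1) v = 0 := by
              rw [← KoszulAux.wedgeList_ofFn]
              exact KoszulAux.wedgeList_eq_zero_of_long _ (by simp; omega)
            rw [hzX, map_zero, zero_mul, zero_mul, smul_zero]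
      | zero => simp
      | add Y₁ Y₂ _ _ h1 h2 => rw [map_add, mul_add, mul_add, h1, h2, smul_add]
      | smul c Y _ h => rw [map_smul, mul_smul_comm, h, mul_smul_comm, smul_comm]
  | zero => simp
  | add X₁ X₂ _ _ h1 h2 => rw [map_add, add_mul, h1, h2, add_mul, smul_add]
  | smul c X _ h => rw [map_smul, smul_mul_assoc, h, smul_mul_assoc, smul_comm]
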